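/- Suppose a map f : X → Y between uniform spaces has chain lifting, and F is an entourage of X such that any two F-chains in X that start at the same point and have identical images under f are F-close. Then the quotient map q_F : X → X_f/F generates a uniform structure on X_f/F; that is, the family {(q_F × q_F)(D) : D an entourage of X} is a basis for a uniform structure on X_f/F. -/

import Mathlib

open Filter Set

universe u v

section Chains

variable {X : Type u} {Y : Type v}

/-- `c` is an `E`-chain: consecutive members of the list lie in `E`. -/
def IsEChain (E : Set (X × X)) (c : List X) : Prop :=
  c.Chain' (fun a b => (a, b) ∈ E)

/-- Two chains (necessarily of the same length) are `E`-close. -/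
def EClose (E : Set (X × X)) (c d : List X) : Prop :=
  List.Forall₂ (fun a b => (a, b) ∈ E) c d

variable [UniformSpace X] [UniformSpace Y]

/-- `f` generates the uniform structure on `Y`: it is uniformly continuous,
surjective, and images of entourages are entourages. -/
def GeneratesUS (f : X → Y) : Prop :=
  UniformContinuous f ∧ Function.Surjective f ∧
    ∀ E ∈ uniformity X, Prod.map f f '' E ∈ uniformity Y

/-- `f` has chain lifting. -/
def ChainLifting (f : X → Y) : Prop :=
  ∀ E ∈ uniformity X, ∃ F ∈ uniformity X, ∀ x : X, ∀ c : List Y,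
    IsEChain (Prod.map f f '' F) c → c.head? = some (f x) →
      ∃ d : List X, IsEChain E d ∧ d.head? = some x ∧ d.map f = c

/-- `f` has uniqueness of chain lifts. -/
def UniqueChainLifts (f : X → Y) : Prop :=
  ∀ E ∈ uniformity X, ∃ F ∈ uniformity X, F ⊆ E ∧ ∀ c d : List X,
    IsEChain F c → IsEChain F d → c.head? = d.head? → c.map f = d.map f → c = d

/-- `f` has approximate uniqueness of chain lifts. -/
def ApproxUniqueChainLifts (f : X → Y) : Prop :=
  ∀ E ∈ uniformity X, ∃ F ∈ uniformity X, F ⊆ E ∧ ∀ c d : List X,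
    IsEChain F c → IsEChain F d → c.head? = d.head? → c.map f = d.map f → EClose E c d

/-- `f` has strong approximate uniqueness of chain lifts. -/
def StrongApproxUniqueChainLifts (f : X → Y) : Prop :=
  ∀ E ∈ uniformity X, ∃ F ∈ uniformity X, F ⊆ E ∧ ∀ c d : List X,
    IsEChain F c → IsEChain F d → c.head? = d.head? → c.map f = d.map f → EClose F c d

/-- `f` is a uniform covering map. -/
def IsUCM (f : X → Y) : Prop :=
  GeneratesUS f ∧ ChainLifting f ∧ UniqueChainLifts f

/-- `h` has `F`-bounded fibers. -/
def BoundedFibers {Z : Type*} (F : Set (X × X)) (h : X → Z) : Prop :=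
  ∀ a b : X, h a = h b → (a, b) ∈ F

/-- `f` has complete fibers (each fiber, with the subspace uniformity, is complete). -/
def CompleteFibers (f : X → Y) : Prop :=
  ∀ y : Y, IsComplete (f ⁻¹' {y})

/-- `f` is approximated by uniform covering maps. -/
def ApproxByUCMs (f : X → Y) : Prop :=
  ∀ E ∈ uniformity X, ∃ F ∈ uniformity X, F ⊆ E ∧
    ∃ (Z : Type (max u v)) (_ : UniformSpace Z) (h : X → Z) (g : Z → Y),
      (∀ x, g (h x) = f x) ∧ IsUCM g ∧ BoundedFibers F h

end Chains

section XfEQuot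

variable {X : Type u} {Y : Type v}

/-- `y` can be joined to `x` by an `E`-chain inside the fiber `f⁻¹(f x)`. -/
def fiberRel (f : X → Y) (E : Set (X × X)) (x y : X) : Prop :=
  ∃ c : List X, IsEChain E c ∧ c.head? = some x ∧ c.getLast? = some y ∧
    ∀ z ∈ c, f z = f x

theorem fiberRel_mono (f : X → Y) {F E : Set (X × X)} (h : F ⊆ E) {a b : X}
    (hab : fiberRel f F a b) : fiberRel f E a b := by
  obtain ⟨c, hc, h1, h2, h3⟩ := hab
  exact ⟨c, hc.imp (fun _ _ hx => h hx), h1, h2, h3⟩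

/-- `X_f/E`: the quotient of `X` obtained by identifying each `E`-component of
each fiber of `f` to a point. -/
def XfE (f : X → Y) (E : Set (X × X)) : Type u :=
  Quot (fiberRel f E)

/-- The quotient map `q_E : X → X_f/E`. -/
def qE (f : X → Y) (E : Set (X × X)) : X → XfE f E :=
  Quot.mk (fiberRel f E)

/-- The induced map `φ_{FE} : X_f/F → X_f/E` for `F ⊆ E`, sending `q_F x` to `q_E x`. -/
def phiFE (f : X → Y) {F E : Set (X × X)} (h : F ⊆ E) : XfE f F → XfE f E :=
  Quot.lift (qE f E) (fun _ _ hab => Quot.sound (fiberRel_mono f h hab))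

end XfEQuot

section MainProof

open scoped Uniformity
open scoped SetRel

variable {X : Type u} {Y : Type v} [UniformSpace X] [UniformSpace Y]

private lemma chain_replicate {E : Set (X × X)} (hE : ∀ x : X, (x, x) ∈ E) (x : X) :
    ∀ n, IsEChain E (List.replicate n x)
  | 0 => List.isChain_nil
  | 1 => by simp [IsEChain, List.Chain']
  | (n + 2) => by
    rw [List.replicate_succ, List.replicate_succ]
    exact List.IsChain.cons_cons (hE x)
      (by rw [← List.replicate_succ]; exact chain_replicate hE x (n + 1))

private lemma forall₂_replicate_left {R : X → X → Prop} {x : X} :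
    ∀ {l : List X} {n : ℕ}, List.Forall₂ R (List.replicate n x) l → ∀ b ∈ l, R x b := by
  intro l
  induction l with
  | nil => simp
  | cons a t ih =>
    intro n h
    cases n with
    | zero => simp at h
    | succ n =>
      rw [List.replicate_succ, List.forall₂_cons] at h
      intro b hb
      rcases List.mem_cons.1 hb with rfl | hb
      · exact h.1
      · exact ih h.2 b hb

private lemma forall₂_replicate_right {R : X → X → Prop} {x : X} :
    ∀ {l : List X} {n : ℕ}, List.Forall₂ R l (List.replicate n x) → ∀ b ∈ l, R b x := by
  intro l
  induction l with
  | nil => simp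
  | cons a t ih =>
    intro n h
    cases n with
    | zero => simp at h
    | succ n =>
      rw [List.replicate_succ, List.forall₂_cons] at h
      intro b hb
      rcases List.mem_cons.1 hb with rfl | hb
      · exact h.1
      · exact ih h.2 b hb

variable {f : X → Y} {F : Set (X × X)}

/-- The one-step relation: same fiber and `F`-related. -/
private def SRel (f : X → Y) (F : Set (X × X)) (x y : X) : Prop :=
  f x = f y ∧ (x, y) ∈ F

section WithHyps

variable (hF : F ∈ uniformity X)
variable (hchains : ∀ c d : List X, IsEChain F c → IsEChain F d →
      c.head? = d.head? → c.map f = d.map f → EClose F c d)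

include hF hchains

private lemma interchain {c : List X} {x : X} (hc : IsEChain F c)
    (hhead : c.head? = some x) (hfib : ∀ z ∈ c, f z = f x) :
    EClose F (List.replicate c.length x) c := by
  cases c with
  | nil => simp at hhead
  | cons a t =>
    have hax : a = x := by simpa using hhead
    subst hax
    have hrep : IsEChain F (List.replicate (a :: t).length a) :=
      chain_replicate (fun _ => refl_mem_uniformity hF) a _
    have hmap : (List.replicate (a :: t).length a).map f = (a :: t).map f := by
      rw [List.map_replicate]
      have : (a :: t).map f = List.replicate ((a :: t).map f).length (f a) := by
        rw [List.eq_replicate_length]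
        intro b hb
        obtain ⟨z, hz, rfl⟩ := List.mem_map.1 hb
        exact hfib z hz
      simpa using this.symm
    have hhd : (List.replicate (a :: t).length a).head? = (a :: t).head? := by
      simp [List.replicate_succ]
    exact hchains _ _ hrep hc hhd hmap

private lemma close_fwd {c : List X} {x : X} (hc : IsEChain F c)
    (hhead : c.head? = some x) (hfib : ∀ z ∈ c, f z = f x) :
    ∀ z ∈ c, (x, z) ∈ F :=
  forall₂_replicate_left (interchain hF hchains hc hhead hfib)

private lemma close_bwd {c : List X} {x : X} (hc : IsEChain F c)
    (hhead : c.head? = some x) (hfib : ∀ z ∈ c, f z = f x) :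
    ∀ z ∈ c, (z, x) ∈ F := by
  have hrep : IsEChain F (List.replicate c.length x) :=
    chain_replicate (fun a => refl_mem_uniformity hF) x _
  have hhd : c.head? = (List.replicate c.length x).head? := by
    cases c with
    | nil => simp at hhead
    | cons a t => simpa [List.replicate_succ] using hhead
  have hmap : c.map f = (List.replicate c.length x).map f := by
    rw [List.map_replicate]
    rw [show c.length = (c.map f).length by simp]
    rw [List.eq_replicate_length]
    intro b hb
    obtain ⟨z, hz, rfl⟩ := List.mem_map.1 hb
    exact hfib z hz
  have h2 : List.Forall₂ (fun a b => (a, b) ∈ F) c (List.replicate c.length x) :=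
    hchains _ _ hc hrep hhd hmap
  exact fun z hz => forall₂_replicate_right h2 z hz

private lemma srel_symm {x y : X} (h : SRel f F x y) : SRel f F y x := by
  obtain ⟨hfxy, hxy⟩ := h
  refine ⟨hfxy.symm, ?_⟩
  have hc : IsEChain F [x, y] := by simp [IsEChain, List.Chain', hxy]
  have := close_bwd (x := x) hF hchains hc (by simp)
    (by intro z hz; rcases List.mem_cons.1 hz with rfl | hz
        · rfl
        · simp at hz; rw [hz, hfxy]) y (by simp)
  exact this

private lemma srel_trans {x y z : X} (h1 : SRel f F x y) (h2 : SRel f F y z) :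
    SRel f F x z := by
  obtain ⟨hfxy, hxy⟩ := h1
  obtain ⟨hfyz, hyz⟩ := h2
  have hfz : f z = f x := (hfxy.trans hfyz).symm
  have hc : IsEChain F [x, y, z] := by simp [IsEChain, List.Chain', hxy, hyz]
  have hzx : (z, x) ∈ F := close_bwd (x := x) hF hchains hc (by simp)
    (by intro w hw
        rcases List.mem_cons.1 hw with rfl | hw
        · rfl
        rcases List.mem_cons.1 hw with rfl | hw
        · exact hfxy.symm
        · simp at hw; rw [hw, hfz])
    z (by simp)
  exact srel_symm hF hchains ⟨hfz, hzx⟩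

private lemma fiberRel_srel {x y : X} (h : fiberRel f F x y) : SRel f F x y := by
  obtain ⟨c, hc, hhead, hlast, hfib⟩ := h
  have hy : y ∈ c := by
    obtain ⟨hne, hy⟩ := List.mem_getLast?_eq_getLast (l := c) (x := y)
      (by rw [Option.mem_def, hlast])
    exact hy ▸ List.getLast_mem hne
  exact ⟨(hfib y hy).symm, close_fwd hF hchains hc hhead hfib y hy⟩

omit hF hchains in
private lemma srel_fiberRel {x y : X} (h : SRel f F x y) : fiberRel f F x y := by
  obtain ⟨hfxy, hxy⟩ := h
  refine ⟨[x, y], by simp [IsEChain, List.Chain', hxy], by simp, by simp, ?_⟩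
  intro z hz
  rcases List.mem_cons.1 hz with rfl | hz
  · rfl
  · simp at hz; rw [hz, hfxy]

private lemma q_eq_iff {x y : X} : qE f F x = qE f F y ↔ SRel f F x y := by
  constructor
  · intro h
    have h' := Quot.eqvGen_exact h
    clear h
    induction h' with
    | rel a b hab => exact fiberRel_srel hF hchains hab
    | refl a => exact ⟨rfl, refl_mem_uniformity hF⟩
    | symm a b _ ih => exact srel_symm hF hchains ih
    | trans a b c _ _ ih1 ih2 => exact srel_trans hF hchains ih1 ih2
  · intro h
    exact Quot.sound (srel_fiberRel h)

private lemma transport (hcl : ChainLifting f) {E' : Set (X × X)}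
    (hE' : E' ∈ uniformity X) (hE'F : E' ⊆ F) :
    ∃ G ∈ uniformity X, G ⊆ F ∧ ∀ x x' y : X, SRel f F x x' → (x, y) ∈ G →
      ∃ y', SRel f F y y' ∧ (x', y') ∈ E' := by
  obtain ⟨G0, hG0, hlift⟩ := hcl E' hE'
  refine ⟨G0 ∩ F, inter_mem hG0 hF, inter_subset_right, ?_⟩
  rintro x x' y ⟨hfxx', hxx'⟩ ⟨hyG0, hyF⟩
  have hchainY : IsEChain (Prod.map f f '' G0) [f x, f y] := by
    simp only [IsEChain, List.Chain', List.isChain_cons_cons, List.isChain_singleton, and_true]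
    exact ⟨(x, y), hyG0, rfl⟩
  obtain ⟨d, hd, hdhead, hdmap⟩ := hlift x' [f x, f y] hchainY (by simp [hfxx'])
  have hlen : d.length = 2 := by
    have := congrArg List.length hdmap; simpa using this
  rcases d with _ | ⟨a, _ | ⟨b, _ | ⟨e, t⟩⟩⟩ <;> simp at hlen
  obtain rfl : a = x' := by simpa using hdhead
  simp only [List.map_cons, List.map_nil, List.cons.injEq, and_true] at hdmap
  obtain ⟨hfa, hfb⟩ := hdmap
  have hx'b : (a, b) ∈ E' := by
    simpa [IsEChain, List.Chain'] using hd
  have hclose := hchains [x, x, y] [x, a, b]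
    (by simp [IsEChain, List.Chain', refl_mem_uniformity hF, hyF])
    (by simp [IsEChain, List.Chain', hxx', hE'F hx'b])
    (by simp) (by simp [← hfxx', hfa, hfb])
  simp only [EClose, List.forall₂_cons, List.Forall₂.nil, and_true,
    List.forall₂_nil_right_iff] at hclose
  exact ⟨b, ⟨hfb.symm, hclose.2.2⟩, hx'b⟩

private lemma comp_main (hcl : ChainLifting f) {D : Set (X × X)}
    (hD : D ∈ uniformity X) :
    ∃ D' ∈ uniformity X,
      (Prod.map (qE f F) (qE f F) '' D') ○ (Prod.map (qE f F) (qE f F) '' D') ⊆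
        Prod.map (qE f F) (qE f F) '' D := by
  obtain ⟨E0, hE0, hE0comp⟩ := comp_mem_uniformity_sets hD
  set E' := E0 ∩ F with hE'def
  have hE' : E' ∈ uniformity X := inter_mem hE0 hF
  have hE'F : E' ⊆ F := inter_subset_right
  have hE'comp : E' ○ E' ⊆ D := fun p hp =>
    hE0comp (SetRel.comp_subset_comp inter_subset_left inter_subset_left hp)
  obtain ⟨G, hG, _, htrans⟩ := transport hF hchains hcl hE' hE'F
  refine ⟨G ∩ E', inter_mem hG hE', ?_⟩
  rintro ⟨p, r⟩ ⟨m, ⟨⟨x1, y1⟩, h1, hpm⟩, ⟨⟨x2, y2⟩, h2, hmr⟩⟩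
  simp only [Prod.map_apply, Prod.mk.injEq] at hpm hmr
  have hS : SRel f F x2 y1 := srel_symm hF hchains
    ((q_eq_iff hF hchains).1 (hpm.2.trans hmr.1.symm))
  obtain ⟨y2', hSy, hy1y2'⟩ := htrans x2 y1 y2 hS h2.1
  refine ⟨(x1, y2'), hE'comp ⟨y1, h1.2, hy1y2'⟩, ?_⟩
  simp only [Prod.map_apply, Prod.mk.injEq]
  exact ⟨hpm.1, ((q_eq_iff hF hchains).2 (srel_symm hF hchains hSy)).trans hmr.2⟩

end WithHyps

end MainProof

open scoped Uniformity in

/-- If `f` has chain lifting and `F` is an entourage of `X` such that any two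
`F`-chains starting at the same point with identical images under `f` are
`F`-close, then `q_F` generates a uniform structure on `X_f/F`: the images of
entourages of `X` under `q_F × q_F` form a basis of a uniformity on `X_f/F`. -/
theorem qE_generates_uniformity
    {X : Type u} {Y : Type v} [UniformSpace X] [UniformSpace Y] (f : X → Y)
    (hcl : ChainLifting f) (F : Set (X × X)) (hF : F ∈ uniformity X)
    (hchains : ∀ c d : List X, IsEChain F c → IsEChain F d →
      c.head? = d.head? → c.map f = d.map f → EClose F c d) :
    ∃ u : UniformSpace (XfE f F),
      (@uniformity (XfE f F) u).HasBasis (fun D : Set (X × X) => D ∈ uniformity X)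
        (fun D => Prod.map (qE f F) (qE f F) '' D) := by
    classical
  have hmono : Monotone (fun D : Set (X × X) => Prod.map (qE f F) (qE f F) '' D) :=
    fun _ _ h => Set.image_mono h
  set 𝔉 := (uniformity X).lift' (fun D : Set (X × X) => Prod.map (qE f F) (qE f F) '' D)
    with h𝔉
  have hB : 𝔉.HasBasis (fun D : Set (X × X) => D ∈ uniformity X)
      (fun D => Prod.map (qE f F) (qE f F) '' D) :=
    (Filter.basis_sets _).lift' hmono
  have refl' : ∀ r ∈ 𝔉, ∀ z, (z, z) ∈ r := by
    intro r hr z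
    obtain ⟨D, hD, hsub⟩ := hB.mem_iff.1 hr
    obtain ⟨x, rfl⟩ := Quot.exists_rep z
    exact hsub ⟨(x, x), refl_mem_uniformity hD, rfl⟩
  have symm' : ∀ r ∈ 𝔉, Prod.swap ⁻¹' r ∈ 𝔉 := by
    intro r hr
    obtain ⟨D, hD, hsub⟩ := hB.mem_iff.1 hr
    refine hB.mem_iff.2 ⟨Prod.swap ⁻¹' D, tendsto_swap_uniformity hD, ?_⟩
    rintro ⟨a, b⟩ ⟨⟨x, y⟩, hxy, hab⟩
    simp only [Prod.map_apply, Prod.mk.injEq] at hab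
    show (b, a) ∈ r
    exact hsub ⟨(y, x), hxy, by simp [Prod.map_apply, hab.1, hab.2]⟩
  have comp' : ∀ r ∈ 𝔉, ∃ t ∈ 𝔉, SetRel.comp t t ⊆ r := by
    intro r hr
    obtain ⟨D, hD, hsub⟩ := hB.mem_iff.1 hr
    obtain ⟨D', hD', hcomp⟩ := comp_main hF hchains hcl hD
    exact ⟨_, hB.mem_of_mem hD', fun p hp => hsub (hcomp hp)⟩
  exact ⟨UniformSpace.ofCore (UniformSpace.Core.mk' 𝔉 refl' symm' comp'), hB⟩
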